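/- Let X be a square-integrable real random variable and S_{t'}, S_t real random variables such that S_{t'} = S_t + Z where Z is independent of (X, S_t) with E[Z]=0. If additionally E[X|S_{t'}, S_t] = E[X|S_t], then E[(X − E[X|S_{t'}])(X − E[X|S_t]) | S_{t'}, S_t] = E[(X − E[X|S_t])² | S_{t'}, S_t] almost surely. -/

import Mathlib

open MeasureTheory ProbabilityTheory

/-- The conditional expectation of an `L²` function is in `L²` (finite measure case). -/
lemma memLp2_condexp_aux {Ω : Type*} {m m0 : MeasurableSpace Ω} (hm : m ≤ m0)
    (μ : Measure Ω) [IsFiniteMeasure μ] {f : Ω → ℝ} (hf : MemLp f 2 μ) :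
    MemLp (μ[f|m]) 2 μ := by
  set g := ((condExpL2 ℝ ℝ hm (hf.toLp f) : Lp ℝ 2 μ) : Ω → ℝ) with hg
  have hg2 : MemLp g 2 μ := Lp.memLp _
  have hae : g =ᵐ[μ] μ[f|m] := by
    refine ae_eq_condExp_of_forall_setIntegral_eq hm (hf.integrable one_le_two) ?_ ?_ ?_
    · intro s hs hμs
      exact (hg2.integrable one_le_two).integrableOn
    · intro s hs hμs
      rw [integral_condExpL2_eq hm (hf.toLp f) hs hμs.ne]
      exact setIntegral_congr_ae (hm s hs) ((hf.coeFn_toLp).mono fun x hx _ => hx)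
    · exact aestronglyMeasurable_condExpL2 hm _
  exact hg2.ae_eq hae

/-- Product of two `L²` real functions is integrable. -/
lemma integrable_mul_of_memLp2 {Ω : Type*} {m0 : MeasurableSpace Ω} {μ : Measure Ω}
    {f g : Ω → ℝ} (hf : MemLp f 2 μ) (hg : MemLp g 2 μ) :
    Integrable (fun ω => f ω * g ω) μ := by
  have : MemLp (f • g) 1 μ := MemLp.smul hg hf
  exact memLp_one_iff_integrable.mp this

/-- If `S_{t'} = S_t + Z` with `Z` independent of `(X, S_t)` and zero mean, and if
`E[X | S_{t'}, S_t] = E[X | S_t]`, then the posterior covariance of the two Bayes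
estimates equals the posterior variance of the finer one. -/
theorem stmt_5 {Ω : Type*} {m0 : MeasurableSpace Ω} (μ : Measure Ω)
    [IsProbabilityMeasure μ]
    (X St' St Z : Ω → ℝ)
    (hXm : Measurable X) (hStm : Measurable St) (hZm : Measurable Z)
    (hX : MemLp X 2 μ)
    (hsum : St' = St + Z)
    (hindep : IndepFun (fun ω => (X ω, St ω)) Z μ)
    (hZmean : ∫ ω, Z ω ∂μ = 0)
    (hsuff : μ[X | MeasurableSpace.comap (fun ω => (St' ω, St ω)) inferInstance]
      =ᵐ[μ] μ[X | MeasurableSpace.comap St inferInstance]) :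
    μ[fun ω => (X ω - (μ[X | MeasurableSpace.comap St' inferInstance]) ω) *
        (X ω - (μ[X | MeasurableSpace.comap St inferInstance]) ω)
      | MeasurableSpace.comap (fun ω => (St' ω, St ω)) inferInstance]
    =ᵐ[μ]
    μ[fun ω => (X ω - (μ[X | MeasurableSpace.comap St inferInstance]) ω) ^ 2
      | MeasurableSpace.comap (fun ω => (St' ω, St ω)) inferInstance] := by
  have hSt'm : Measurable St' := by rw [hsum]; exact hStm.add hZm
  set mp := MeasurableSpace.comap (fun ω => (St' ω, St ω)) inferInstance with hmp
  set mS := MeasurableSpace.comap St inferInstance with hmS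
  set mS' := MeasurableSpace.comap St' inferInstance with hmS'
  have hpm : Measurable[m0] fun ω => (St' ω, St ω) := hSt'm.prodMk hStm
  have hm : mp ≤ m0 := hpm.comap_le
  have hmSm : mS ≤ m0 := hStm.comap_le
  have hmS'm : mS' ≤ m0 := hSt'm.comap_le
  have hmSle : mS ≤ mp := by
    rw [hmS, hmp,
      show St = (fun p : ℝ × ℝ => p.2) ∘ (fun ω => (St' ω, St ω)) from rfl,
      ← MeasurableSpace.comap_comp]
    exact MeasurableSpace.comap_mono measurable_snd.comap_le
  have hmS'le : mS' ≤ mp := by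
    rw [hmS', hmp,
      show St' = (fun p : ℝ × ℝ => p.1) ∘ (fun ω => (St' ω, St ω)) from rfl,
      ← MeasurableSpace.comap_comp]
    exact MeasurableSpace.comap_mono measurable_fst.comap_le
  set Y := μ[X|mS] with hY
  set E' := μ[X|mS'] with hE'
  -- L² facts
  have hY2 : MemLp Y 2 μ := memLp2_condexp_aux hmSm μ hX
  have hE'2 : MemLp E' 2 μ := memLp2_condexp_aux hmS'm μ hX
  have hXY2 : MemLp (fun ω => X ω - Y ω) 2 μ := hX.sub hY2
  have hYE'2 : MemLp (fun ω => Y ω - E' ω) 2 μ := hY2.sub hE'2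
  -- measurability
  have hYsm : StronglyMeasurable[mp] Y := (stronglyMeasurable_condExp).mono hmSle
  have hE'sm : StronglyMeasurable[mp] E' := (stronglyMeasurable_condExp).mono hmS'le
  -- integrability of products
  have hint1 : Integrable (fun ω => (X ω - Y ω) ^ 2) μ := by
    have := integrable_mul_of_memLp2 hXY2 hXY2
    simpa [sq] using this
  have hint2 : Integrable (fun ω => (Y ω - E' ω) * (X ω - Y ω)) μ :=
    integrable_mul_of_memLp2 hYE'2 hXY2
  have hintXY : Integrable (fun ω => X ω - Y ω) μ := hXY2.integrable one_le_two
  -- key vanishing: μ[X - Y | mp] =ᵐ 0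
  have hXint : Integrable X μ := hX.integrable one_le_two
  have hYint : Integrable Y μ := hY2.integrable one_le_two
  have hcondY : μ[Y|mp] = Y :=
    condExp_of_stronglyMeasurable hm hYsm hYint
  have hzero : μ[fun ω => X ω - Y ω|mp] =ᵐ[μ] 0 := by
    have hsub : μ[fun ω => X ω - Y ω|mp] =ᵐ[μ] μ[X|mp] - μ[Y|mp] := condExp_sub hXint hYint mp
    refine hsub.trans ?_
    rw [hcondY]
    filter_upwards [hsuff] with ω hω
    simp [hω]
  -- the pull-out property for the cross term
  have hcross : μ[(fun ω => Y ω - E' ω) * (fun ω => X ω - Y ω)|mp] =ᵐ[μ] 0 := by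
    have := condExp_mul_of_stronglyMeasurable_left (m := mp) (hYsm.sub hE'sm)
      (by exact hint2) hintXY
    refine this.trans ?_
    filter_upwards [hzero] with ω hω
    simp only [Pi.mul_apply, Pi.zero_apply] at hω ⊢
    rw [hω]; ring
  -- decompose the integrand
  have hdecomp : (fun ω => (X ω - E' ω) * (X ω - Y ω))
      = (fun ω => (X ω - Y ω) ^ 2) + (fun ω => Y ω - E' ω) * (fun ω => X ω - Y ω) := by
    funext ω; simp only [Pi.add_apply, Pi.mul_apply]; ring
  calc μ[fun ω => (X ω - E' ω) * (X ω - Y ω)|mp]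
      = μ[(fun ω => (X ω - Y ω) ^ 2) + (fun ω => Y ω - E' ω) * (fun ω => X ω - Y ω)|mp] := by
        rw [hdecomp]
    _ =ᵐ[μ] μ[fun ω => (X ω - Y ω) ^ 2|mp]
        + μ[(fun ω => Y ω - E' ω) * (fun ω => X ω - Y ω)|mp] :=
        condExp_add hint1 (by exact hint2) mp
    _ =ᵐ[μ] μ[fun ω => (X ω - Y ω) ^ 2|mp] := by
        filter_upwards [hcross] with ω hω
        simp [hω]
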